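/- arXiv:1504.07923 — 2 statements merged into one kernel-verified Lean document; each statement's English description precedes it below -/
import Mathlib

section
/- For every δ > 0 and every x ∈ D(δ), exp(θ(x|δ)) = sin(x − iδ)/sin(x + iδ); moreover, if in addition −π < Re x < 0, then θ(x|δ) = Log(sin(x − iδ)/sin(x + iδ)), where Log is the principal complex logarithm (imaginary part in (−π, π]). Thus θ(·|δ) is a determination of the logarithm of sin(x − iδ)/sin(x + iδ) coinciding with the principal branch in the strip −π < Re x < 0. -/
/-- The kernel `K(x|δ) = (1/(2πi))·(cot(x − iδ) − cot(x + iδ))`. -/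
noncomputable def Kker (δ : ℝ) (x : ℂ) : ℂ :=
  (1 / (2 * (Real.pi : ℂ) * Complex.I)) *
    (Complex.cot (x - Complex.I * δ) - Complex.cot (x + Complex.I * δ))

/-- The cut domain `D(δ)`: the plane minus the four horizontal rays
`{t ± iδ : t ≥ 0}` and `{t ± iδ : t ≤ −π}`. -/
def Ddom (δ : ℝ) : Set ℂ :=
  {x | ¬ ((x.im = δ ∨ x.im = -δ) ∧ (0 ≤ x.re ∨ x.re ≤ -Real.pi))}

/-- `θ(x|δ)`: `2πi` times the integral of `K(·|δ)` along the contour running from `−π/2`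
vertically to `−π/2 + i·Im x` and then horizontally to `x`. -/
noncomputable def thetaFn (δ : ℝ) (x : ℂ) : ℂ :=
  2 * (Real.pi : ℂ) * Complex.I *
    (Complex.I * (∫ t in (0:ℝ)..x.im, Kker δ ((-(Real.pi/2) : ℝ) + Complex.I * (t : ℂ)))
      + ∫ u in (-(Real.pi/2) : ℝ)..x.re, Kker δ ((u : ℂ) + Complex.I * (x.im : ℂ)))

/- ### Auxiliary lemmas -/

lemma sin_ne_zero_im {z : ℂ} (h : z.im ≠ 0) : Complex.sin z ≠ 0 := by
  rw [Ne, Complex.sin_eq_zero_iff]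
  rintro ⟨k, rfl⟩
  simp at h

lemma sin_ne_zero_of_re_mem {z : ℂ} (h1 : -Real.pi < z.re) (h2 : z.re < 0) :
    Complex.sin z ≠ 0 := by
  rw [Ne, Complex.sin_eq_zero_iff]
  rintro ⟨k, rfl⟩
  have hre : ((k : ℂ) * (Real.pi : ℂ)).re = (k : ℝ) * Real.pi := by simp
  rw [hre] at h1 h2
  have hπ := Real.pi_pos
  have hk1 : (-1 : ℝ) < (k : ℝ) := by nlinarith
  have hk2 : (k : ℝ) < 0 := by nlinarith
  have : (-1 : ℤ) < k := by exact_mod_cast hk1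
  have : k < 0 := by exact_mod_cast hk2
  omega

lemma sin_ne_zero_of_re_pi_half {z : ℂ} (h : z.re = -(Real.pi/2)) :
    Complex.sin z ≠ 0 := by
  rw [Ne, Complex.sin_eq_zero_iff]
  rintro ⟨k, rfl⟩
  have hre : ((k : ℂ) * (Real.pi : ℂ)).re = (k : ℝ) * Real.pi := by simp
  rw [hre] at h
  have hπ := Real.pi_pos
  have h2 : (2 * k + 1 : ℝ) * Real.pi = 0 := by push_cast; linarith
  have h3 : (2 * k + 1 : ℝ) = 0 := by
    rcases mul_eq_zero.mp h2 with h | h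
    · exact h
    · linarith
  have : (2 * k + 1 : ℤ) = 0 := by exact_mod_cast h3
  omega

open MeasureTheory in
/-- Main segment lemma: along a straight segment avoiding the zeros of both sines, the
exponential of the integral of the log-derivative reproduces the ratio of endpoint values. -/
lemma seg_exp (δ : ℝ) (v : ℂ) (p : ℝ → ℂ) (hp : ∀ t, HasDerivAt p v t) (a b : ℝ)
    (h : ∀ t ∈ Set.uIcc a b, Complex.sin (p t - Complex.I * δ) ≠ 0 ∧
        Complex.sin (p t + Complex.I * δ) ≠ 0) :
    Complex.exp (∫ t in a..b,
        v * (Complex.cot (p t - Complex.I * δ) - Complex.cot (p t + Complex.I * δ))) *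
      (Complex.sin (p b + Complex.I * δ) * Complex.sin (p a - Complex.I * δ)) =
      Complex.sin (p b - Complex.I * δ) * Complex.sin (p a + Complex.I * δ) := by
  have hpc : Continuous p := by
    rw [continuous_iff_continuousAt]; exact fun t => (hp t).continuousAt
  set f : ℝ → ℂ := fun t =>
    v * (Complex.cot (p t - Complex.I * δ) - Complex.cot (p t + Complex.I * δ)) with hf
  set U : Set ℝ := {t | Complex.sin (p t - Complex.I * δ) ≠ 0 ∧
      Complex.sin (p t + Complex.I * δ) ≠ 0} with hUdef
  have hU : IsOpen U := by
    have h1 : IsOpen {t : ℝ | Complex.sin (p t - Complex.I * δ) ≠ 0} :=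
      isOpen_compl_singleton.preimage (Complex.continuous_sin.comp (hpc.sub continuous_const))
    have h2 : IsOpen {t : ℝ | Complex.sin (p t + Complex.I * δ) ≠ 0} :=
      isOpen_compl_singleton.preimage (Complex.continuous_sin.comp (hpc.add continuous_const))
    exact h1.inter h2
  have hsub : Set.uIcc a b ⊆ U := fun t ht => h t ht
  have hfU : ContinuousOn f U := by
    apply continuousOn_const.mul
    apply ContinuousOn.sub
    · simp only [Complex.cot_eq_cos_div_sin]
      exact ContinuousOn.div
        ((Complex.continuous_cos.comp (hpc.sub continuous_const)).continuousOn)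
        ((Complex.continuous_sin.comp (hpc.sub continuous_const)).continuousOn)
        (fun t ht => ht.1)
    · simp only [Complex.cot_eq_cos_div_sin]
      exact ContinuousOn.div
        ((Complex.continuous_cos.comp (hpc.add continuous_const)).continuousOn)
        ((Complex.continuous_sin.comp (hpc.add continuous_const)).continuousOn)
        (fun t ht => ht.2)
  set G : ℝ → ℂ := fun r => ∫ t in a..r, f t with hG
  have hGd : ∀ t ∈ Set.uIcc a b, HasDerivAt G (f t) t := by
    intro t ht
    apply intervalIntegral.integral_hasDerivAt_right
    · exact (hfU.mono (le_trans (Set.uIcc_subset_uIcc Set.left_mem_uIcc ht) hsub)).intervalIntegrable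
    · exact hfU.stronglyMeasurableAtFilter hU t (hsub ht)
    · exact hfU.continuousAt (hU.mem_nhds (hsub ht))
  have hsm : ∀ t, HasDerivAt (fun t => Complex.sin (p t - Complex.I * δ))
      (Complex.cos (p t - Complex.I * δ) * v) t := fun t =>
    (Complex.hasDerivAt_sin _).comp t ((hp t).sub_const _)
  have hsp : ∀ t, HasDerivAt (fun t => Complex.sin (p t + Complex.I * δ))
      (Complex.cos (p t + Complex.I * δ) * v) t := fun t =>
    (Complex.hasDerivAt_sin _).comp t ((hp t).add_const _)
  set H : ℝ → ℂ := fun t =>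
    Complex.exp (G t) * Complex.sin (p t + Complex.I * δ) / Complex.sin (p t - Complex.I * δ)
    with hH
  have hHd : ∀ t ∈ Set.uIcc a b, HasDerivAt H 0 t := by
    intro t ht
    have hne := h t ht
    have hd := (((hGd t ht).cexp.mul (hsp t)).div (hsm t) hne.1)
    simp only [hH]
    convert hd using 1
    · rfl
    · rfl
    simp only [hf]
    rw [Complex.cot_eq_cos_div_sin, Complex.cot_eq_cos_div_sin, eq_comm,
      div_eq_iff (pow_ne_zero 2 hne.1), zero_mul]
    simp only [Pi.mul_apply]
    field_simp [hne.1, hne.2]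
    ring
  have hint : IntervalIntegrable (fun _ : ℝ => (0 : ℂ)) volume a b :=
    intervalIntegrable_const
  have key := intervalIntegral.integral_eq_sub_of_hasDerivAt hHd hint
  rw [intervalIntegral.integral_zero] at key
  have hHba : H b = H a := by
    have := sub_eq_zero.mp key.symm
    exact this
  have hGa : G a = 0 := intervalIntegral.integral_same
  have h1 := h a Set.left_mem_uIcc
  have h2 := h b Set.right_mem_uIcc
  simp only [hH] at hHba
  rw [div_eq_div_iff h2.1 h1.1, hGa, Complex.exp_zero, one_mul] at hHba
  linear_combination hHba

lemma theta_eq (δ : ℝ) (x : ℂ) :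
    thetaFn δ x =
      Complex.I * (∫ t in (0:ℝ)..x.im,
        (Complex.cot (((-(Real.pi/2) : ℝ) : ℂ) + Complex.I * t - Complex.I * δ) -
         Complex.cot (((-(Real.pi/2) : ℝ) : ℂ) + Complex.I * t + Complex.I * δ)))
      + ∫ u in (-(Real.pi/2) : ℝ)..x.re,
        (Complex.cot ((u : ℂ) + Complex.I * x.im - Complex.I * δ) -
         Complex.cot ((u : ℂ) + Complex.I * x.im + Complex.I * δ)) := by
  have hc : (2 * (Real.pi : ℂ) * Complex.I) ≠ 0 := by
    simp [Real.pi_ne_zero, Complex.I_ne_zero]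
  unfold thetaFn Kker
  rw [intervalIntegral.integral_const_mul, intervalIntegral.integral_const_mul]
  field_simp

lemma cot_vert (w : ℝ) :
    Complex.cot (((-(Real.pi/2) : ℝ) : ℂ) + Complex.I * w) =
      -(Complex.I * (Real.tanh w : ℂ)) := by
  have hcosh : (Real.cosh w : ℂ) ≠ 0 := by
    exact_mod_cast (Real.cosh_pos w).ne'
  rw [Complex.cot_eq_cos_div_sin, mul_comm Complex.I (w:ℂ), Complex.cos_add, Complex.sin_add,
    Complex.cos_mul_I, Complex.sin_mul_I, ← Complex.ofReal_cos, ← Complex.ofReal_sin,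
    ← Complex.ofReal_cosh, ← Complex.ofReal_sinh]
  rw [Real.cos_neg, Real.cos_pi_div_two, Real.sin_neg, Real.sin_pi_div_two,
    Real.tanh_eq_sinh_div_cosh]
  push_cast
  field_simp
  ring

lemma sin_decomp (u c : ℝ) :
    Complex.sin ((u : ℂ) + Complex.I * c) =
      ((Real.sin u * Real.cosh c : ℝ) : ℂ) + ((Real.cos u * Real.sinh c : ℝ) : ℂ) * Complex.I := by
  rw [mul_comm Complex.I (c:ℂ), Complex.sin_add, Complex.cos_mul_I, Complex.sin_mul_I,
    ← Complex.ofReal_sin, ← Complex.ofReal_cos, ← Complex.ofReal_cosh, ← Complex.ofReal_sinh]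
  push_cast
  ring

/-- `exp(θ(x|δ)) = sin(x−iδ)/sin(x+iδ)` on `D(δ)`; in the strip `−π < Re x < 0`,
`θ(x|δ)` agrees with the principal branch of the logarithm of this ratio. -/
theorem theta_exp_and_principal_branch (δ : ℝ) (hδ : 0 < δ) (x : ℂ) (hx : x ∈ Ddom δ) :
    Complex.exp (thetaFn δ x) =
      Complex.sin (x - Complex.I * δ) / Complex.sin (x + Complex.I * δ) ∧
    (-Real.pi < x.re → x.re < 0 →
      thetaFn δ x =
        Complex.log (Complex.sin (x - Complex.I * δ) / Complex.sin (x + Complex.I * δ))) := by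
  have hπ := Real.pi_pos
  have hxeq : ((x.re : ℂ) + Complex.I * (x.im : ℂ)) = x := by
    rw [mul_comm]; exact Complex.re_add_im x
  -- vertical segment
  have hvp : ∀ t : ℝ, HasDerivAt (fun t : ℝ => ((-(Real.pi/2) : ℝ) : ℂ) + Complex.I * (t:ℂ))
      Complex.I t := by
    intro t
    have h0 : HasDerivAt (fun s : ℝ => (s : ℂ)) 1 t := by
      simpa using (hasDerivAt_id t).ofReal_comp
    simpa using (h0.const_mul Complex.I).const_add (((-(Real.pi/2) : ℝ) : ℂ))
  have hnonV : ∀ t ∈ Set.uIcc (0:ℝ) x.im,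
      Complex.sin ((((-(Real.pi/2) : ℝ) : ℂ) + Complex.I * (t:ℂ)) - Complex.I * δ) ≠ 0 ∧
      Complex.sin ((((-(Real.pi/2) : ℝ) : ℂ) + Complex.I * (t:ℂ)) + Complex.I * δ) ≠ 0 := by
    intro t _
    constructor <;> (apply sin_ne_zero_of_re_pi_half; simp)
  have EV0 := seg_exp δ Complex.I _ hvp 0 x.im hnonV
  beta_reduce at EV0
  have hc0 : Complex.cos (((-(Real.pi/2) : ℝ) : ℂ)) = 0 := by
    rw [← Complex.ofReal_cos]
    simp [Real.cos_pi_div_two]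
  have hw : Complex.sin ((((-(Real.pi/2) : ℝ) : ℂ) + Complex.I * ((0:ℝ):ℂ)) - Complex.I * δ)
      = Complex.sin ((((-(Real.pi/2) : ℝ) : ℂ) + Complex.I * ((0:ℝ):ℂ)) + Complex.I * δ) := by
    have e1 : (((-(Real.pi/2) : ℝ) : ℂ) + Complex.I * ((0:ℝ):ℂ)) - Complex.I * δ
        = ((-(Real.pi/2) : ℝ) : ℂ) - Complex.I * (δ:ℂ) := by push_cast; ring
    have e2 : (((-(Real.pi/2) : ℝ) : ℂ) + Complex.I * ((0:ℝ):ℂ)) + Complex.I * δ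
        = ((-(Real.pi/2) : ℝ) : ℂ) + Complex.I * (δ:ℂ) := by push_cast; ring
    rw [e1, e2, Complex.sin_sub, Complex.sin_add, hc0, zero_mul, sub_zero, add_zero]
  have hw0 : Complex.sin ((((-(Real.pi/2) : ℝ) : ℂ) + Complex.I * ((0:ℝ):ℂ)) + Complex.I * δ)
      ≠ 0 := (hnonV 0 Set.left_mem_uIcc).2
  rw [intervalIntegral.integral_const_mul, hw, ← mul_assoc] at EV0
  have EV := mul_right_cancel₀ hw0 EV0
  -- horizontal segment
  have hhp : ∀ u : ℝ, HasDerivAt (fun u : ℝ => ((u:ℂ) + Complex.I * (x.im:ℂ))) 1 u := by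
    intro u
    have h0 : HasDerivAt (fun s : ℝ => (s : ℂ)) 1 u := by
      simpa using (hasDerivAt_id u).ofReal_comp
    simpa using h0.add_const (Complex.I * (x.im:ℂ))
  have hnonH : ∀ u ∈ Set.uIcc (-(Real.pi/2)) x.re,
      Complex.sin (((u:ℂ) + Complex.I * (x.im:ℂ)) - Complex.I * δ) ≠ 0 ∧
      Complex.sin (((u:ℂ) + Complex.I * (x.im:ℂ)) + Complex.I * δ) ≠ 0 := by
    intro u hu
    by_cases hb : x.im = δ ∨ x.im = -δ
    · have hstrip : ¬(0 ≤ x.re ∨ x.re ≤ -Real.pi) := fun hcon => hx ⟨hb, hcon⟩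
      push_neg at hstrip
      obtain ⟨hr1, hr2⟩ := hstrip
      have hu1 : -Real.pi < u := by
        rcases Set.mem_uIcc.mp hu with ⟨h1, _⟩ | ⟨h1, _⟩ <;> nlinarith
      have hu2 : u < 0 := by
        rcases Set.mem_uIcc.mp hu with ⟨_, h2⟩ | ⟨_, h2⟩ <;> nlinarith
      constructor <;> (apply sin_ne_zero_of_re_mem <;> simpa)
    · push_neg at hb
      constructor
      · apply sin_ne_zero_im
        have : (((u:ℂ) + Complex.I * (x.im:ℂ)) - Complex.I * δ).im = x.im - δ := by simp
        rw [this]; exact sub_ne_zero.mpr hb.1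
      · apply sin_ne_zero_im
        have : (((u:ℂ) + Complex.I * (x.im:ℂ)) + Complex.I * δ).im = x.im + δ := by simp
        rw [this]
        intro hcon; exact hb.2 (by linarith)
  have EH0 := seg_exp δ 1 _ hhp (-(Real.pi/2)) x.re hnonH
  beta_reduce at EH0
  simp only [one_mul] at EH0
  rw [hxeq] at EH0
  -- abbreviations
  have hspx : Complex.sin (x + Complex.I * δ) ≠ 0 := by
    have := (hnonH x.re Set.right_mem_uIcc).2
    rwa [hxeq] at this
  have hsmq : Complex.sin ((((-(Real.pi/2) : ℝ) : ℂ) + Complex.I * (x.im:ℂ)) - Complex.I * δ)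
      ≠ 0 := (hnonV x.im Set.right_mem_uIcc).1
  have hspq : Complex.sin ((((-(Real.pi/2) : ℝ) : ℂ) + Complex.I * (x.im:ℂ)) + Complex.I * δ)
      ≠ 0 := (hnonV x.im Set.right_mem_uIcc).2
  set V := ∫ t in (0:ℝ)..x.im,
      (Complex.cot (((-(Real.pi/2) : ℝ) : ℂ) + Complex.I * t - Complex.I * δ) -
       Complex.cot (((-(Real.pi/2) : ℝ) : ℂ) + Complex.I * t + Complex.I * δ)) with hVdef
  have e1 : Complex.exp (Complex.I * V) =
      Complex.sin ((((-(Real.pi/2) : ℝ) : ℂ) + Complex.I * (x.im:ℂ)) - Complex.I * δ) /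
      Complex.sin ((((-(Real.pi/2) : ℝ) : ℂ) + Complex.I * (x.im:ℂ)) + Complex.I * δ) := by
    rw [eq_div_iff hspq]
    convert EV using 2 <;> push_cast <;> ring
  have e2 : Complex.exp (∫ u in (-(Real.pi/2) : ℝ)..x.re,
      (Complex.cot ((u : ℂ) + Complex.I * x.im - Complex.I * δ) -
       Complex.cot ((u : ℂ) + Complex.I * x.im + Complex.I * δ))) =
      (Complex.sin (x - Complex.I * δ) *
        Complex.sin ((((-(Real.pi/2) : ℝ) : ℂ) + Complex.I * (x.im:ℂ)) + Complex.I * δ)) /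
      (Complex.sin (x + Complex.I * δ) *
        Complex.sin ((((-(Real.pi/2) : ℝ) : ℂ) + Complex.I * (x.im:ℂ)) - Complex.I * δ)) := by
    rw [eq_div_iff (mul_ne_zero hspx hsmq)]
    convert EH0 using 2 <;> push_cast <;> ring
  constructor
  · rw [theta_eq, Complex.exp_add, eq_div_iff hspx, ← hVdef, e1, e2,
      div_mul_div_comm, div_mul_eq_mul_div,
      div_eq_iff (mul_ne_zero hspq (mul_ne_zero hspx hsmq))]
    ring
  · intro hre1 hre2
    have hcot2 : ∀ t : ℝ,
        (Complex.cot (((-(Real.pi/2) : ℝ) : ℂ) + Complex.I * t - Complex.I * δ) -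
         Complex.cot (((-(Real.pi/2) : ℝ) : ℂ) + Complex.I * t + Complex.I * δ))
        = Complex.I * ((Real.tanh (t+δ) - Real.tanh (t-δ) : ℝ) : ℂ) := by
      intro t
      have a1 : ((-(Real.pi/2) : ℝ) : ℂ) + Complex.I * t - Complex.I * δ
          = ((-(Real.pi/2) : ℝ) : ℂ) + Complex.I * ((t - δ : ℝ) : ℂ) := by push_cast; ring
      have a2 : ((-(Real.pi/2) : ℝ) : ℂ) + Complex.I * t + Complex.I * δ
          = ((-(Real.pi/2) : ℝ) : ℂ) + Complex.I * ((t + δ : ℝ) : ℂ) := by push_cast; ring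
      rw [a1, a2, cot_vert, cot_vert]
      push_cast; ring
    have hVval : V = Complex.I *
        (((∫ t in (0:ℝ)..x.im, (Real.tanh (t+δ) - Real.tanh (t-δ))) : ℝ) : ℂ) := by
      rw [hVdef, intervalIntegral.integral_congr (g := fun t : ℝ =>
          Complex.I * ((Real.tanh (t+δ) - Real.tanh (t-δ) : ℝ) : ℂ)) (fun t _ => hcot2 t),
        intervalIntegral.integral_const_mul, intervalIntegral.integral_ofReal]
    have hIVim : (Complex.I * V).im = 0 := by
      rw [hVval]
      simp
    have hlogq : Complex.log
        (Complex.sin ((((-(Real.pi/2) : ℝ) : ℂ) + Complex.I * (x.im:ℂ)) - Complex.I * δ) /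
         Complex.sin ((((-(Real.pi/2) : ℝ) : ℂ) + Complex.I * (x.im:ℂ)) + Complex.I * δ))
        = Complex.I * V := by
      rw [← e1]
      exact Complex.log_exp (by rw [hIVim]; linarith) (by rw [hIVim]; linarith)
    have hustrip : ∀ u ∈ Set.uIcc (-(Real.pi/2)) x.re, -Real.pi < u ∧ u < 0 := by
      intro u hu
      rcases Set.mem_uIcc.mp hu with ⟨h1, h2⟩ | ⟨h1, h2⟩ <;> constructor <;> nlinarith
    have hder : ∀ u ∈ Set.uIcc (-(Real.pi/2)) x.re,
        HasDerivAt (fun u : ℝ => Complex.log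
          (Complex.sin ((u:ℂ) + Complex.I * (x.im:ℂ) - Complex.I * δ) /
           Complex.sin ((u:ℂ) + Complex.I * (x.im:ℂ) + Complex.I * δ)))
          (Complex.cot ((u:ℂ) + Complex.I * (x.im:ℂ) - Complex.I * δ) -
           Complex.cot ((u:ℂ) + Complex.I * (x.im:ℂ) + Complex.I * δ)) u := by
      intro u hu
      obtain ⟨hu1, hu2⟩ := hustrip u hu
      have hsinu : Real.sin u < 0 := Real.sin_neg_of_neg_of_neg_pi_lt hu2 hu1
      have hsmu : Complex.sin ((u:ℂ) + Complex.I * (x.im:ℂ) - Complex.I * δ) ≠ 0 :=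
        (hnonH u hu).1
      have hspu : Complex.sin ((u:ℂ) + Complex.I * (x.im:ℂ) + Complex.I * δ) ≠ 0 :=
        (hnonH u hu).2
      have h0 : HasDerivAt (fun s : ℝ => (s : ℂ)) 1 u := by
        simpa using (hasDerivAt_id u).ofReal_comp
      have hdm : HasDerivAt (fun u : ℝ =>
          Complex.sin ((u:ℂ) + Complex.I * (x.im:ℂ) - Complex.I * δ))
          (Complex.cos ((u:ℂ) + Complex.I * (x.im:ℂ) - Complex.I * δ) * 1) u :=
        (Complex.hasDerivAt_sin _).comp u
          ((h0.add_const (Complex.I * (x.im:ℂ))).sub_const (Complex.I * δ))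
      have hdp : HasDerivAt (fun u : ℝ =>
          Complex.sin ((u:ℂ) + Complex.I * (x.im:ℂ) + Complex.I * δ))
          (Complex.cos ((u:ℂ) + Complex.I * (x.im:ℂ) + Complex.I * δ) * 1) u :=
        (Complex.hasDerivAt_sin _).comp u
          ((h0.add_const (Complex.I * (x.im:ℂ))).add_const (Complex.I * δ))
      have hqd := hdm.div hdp hspu
      have hzm : (u:ℂ) + Complex.I * (x.im:ℂ) - Complex.I * δ
          = (u:ℂ) + Complex.I * ((x.im - δ : ℝ) : ℂ) := by push_cast; ring
      have hzp : (u:ℂ) + Complex.I * (x.im:ℂ) + Complex.I * δ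
          = (u:ℂ) + Complex.I * ((x.im + δ : ℝ) : ℂ) := by push_cast; ring
      have hslit : (Complex.sin ((u:ℂ) + Complex.I * (x.im:ℂ) - Complex.I * δ) /
          Complex.sin ((u:ℂ) + Complex.I * (x.im:ℂ) + Complex.I * δ)) ∈ Complex.slitPlane := by
        have hns : Complex.normSq (((Real.sin u * Real.cosh (x.im + δ) : ℝ) : ℂ) +
            ((Real.cos u * Real.sinh (x.im + δ) : ℝ) : ℂ) * Complex.I) ≠ 0 := by
          rw [← sin_decomp, ← hzp]
          exact (Complex.normSq_pos.mpr hspu).ne'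
        rw [Complex.mem_slitPlane_iff, hzm, hzp, sin_decomp, sin_decomp]
        by_cases hcu : Real.cos u = 0
        · left
          rw [Complex.div_re]
          have c1 := Real.cosh_pos (x.im - δ)
          have c2 := Real.cosh_pos (x.im + δ)
          have hn1 : Real.sin u * Real.cosh (x.im - δ) < 0 := mul_neg_of_neg_of_pos hsinu c1
          have hn2 : Real.sin u * Real.cosh (x.im + δ) < 0 := mul_neg_of_neg_of_pos hsinu c2
          simp only [Complex.add_re, Complex.add_im, Complex.ofReal_re, Complex.ofReal_im,
            Complex.mul_re, Complex.mul_im, Complex.I_re, Complex.I_im, mul_zero, mul_one,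
            zero_mul, sub_zero, zero_add, add_zero, neg_zero, Complex.normSq_add_mul_I, hcu,
            zero_sub]
          rw [← add_div]
          apply div_pos
          · nlinarith
          · nlinarith
        · right
          rw [Complex.div_im]
          simp only [Complex.add_re, Complex.add_im, Complex.ofReal_re, Complex.ofReal_im,
            Complex.mul_re, Complex.mul_im, Complex.I_re, Complex.I_im, mul_zero, mul_one,
            zero_mul, sub_zero, zero_add, add_zero, neg_zero, Complex.normSq_add_mul_I]
          rw [div_sub_div_same, ne_eq, div_eq_zero_iff, not_or]
          constructor
          · have key : Real.cos u * Real.sinh (x.im - δ) * (Real.sin u * Real.cosh (x.im + δ)) -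
                Real.sin u * Real.cosh (x.im - δ) * (Real.cos u * Real.sinh (x.im + δ))
                = Real.sin u * Real.cos u * Real.sinh (-(2*δ)) := by
              have h2 : -(2*δ) = (x.im - δ) - (x.im + δ) := by ring
              rw [h2, Real.sinh_sub (x.im - δ) (x.im + δ)]
              ring
            rw [key]
            have hsh : Real.sinh (-(2*δ)) < 0 := by
              rw [Real.sinh_neg, neg_lt, neg_zero]
              exact Real.sinh_pos_iff.mpr (by linarith)
            exact mul_ne_zero (mul_ne_zero (ne_of_lt hsinu) hcu) (ne_of_lt hsh)
          · have := hns
            rwa [Complex.normSq_add_mul_I] at this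
      have hld := hqd.clog_real hslit
      convert hld using 1
      · rfl
      rw [Complex.cot_eq_cos_div_sin, Complex.cot_eq_cos_div_sin]
      simp only [Pi.div_apply]
      field_simp [hsmu, hspu]
    have hcontH : IntervalIntegrable (fun u : ℝ =>
        Complex.cot ((u:ℂ) + Complex.I * (x.im:ℂ) - Complex.I * δ) -
        Complex.cot ((u:ℂ) + Complex.I * (x.im:ℂ) + Complex.I * δ)) MeasureTheory.volume
        (-(Real.pi/2)) x.re := by
      apply ContinuousOn.intervalIntegrable
      have c1 : Continuous (fun u : ℝ => (u:ℂ) + Complex.I * (x.im:ℂ) - Complex.I * δ) :=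
        (Complex.continuous_ofReal.add continuous_const).sub continuous_const
      have c2 : Continuous (fun u : ℝ => (u:ℂ) + Complex.I * (x.im:ℂ) + Complex.I * δ) :=
        (Complex.continuous_ofReal.add continuous_const).add continuous_const
      apply ContinuousOn.sub
      · simp only [Complex.cot_eq_cos_div_sin]
        exact ContinuousOn.div (Complex.continuous_cos.comp c1).continuousOn
          (Complex.continuous_sin.comp c1).continuousOn (fun u hu => (hnonH u hu).1)
      · simp only [Complex.cot_eq_cos_div_sin]
        exact ContinuousOn.div (Complex.continuous_cos.comp c2).continuousOn
          (Complex.continuous_sin.comp c2).continuousOn (fun u hu => (hnonH u hu).2)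
    have FTC := intervalIntegral.integral_eq_sub_of_hasDerivAt hder hcontH
    rw [theta_eq, ← hVdef, FTC]
    beta_reduce
    rw [hxeq, hlogq]
    ring
end

section
/- For every real x, the series defining ε converges absolutely and ε solves the dressed-energy linear integral equation ε(x) = ε₀(x) − ∫_{−π/2}^{π/2} K(x − y|γ)·ε(y) dy, where ε₀(x) := h − 4J·sinh²(γ)/(cosh(γ) − cos(2x)). -/
open MeasureTheory intervalIntegral Real

/-- The dressed energy `ε(x) = h/2 − 2J·sinh(γ)·Σ_{n∈ℤ} cos(2nx)/cosh(nγ)`. -/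
noncomputable def dressedEnergy (γ J h : ℝ) (x : ℝ) : ℝ :=
  h / 2 - 2 * J * Real.sinh γ * ∑' n : ℤ, Real.cos (2 * n * x) / Real.cosh (n * γ)

section helpers

lemma Kker_eq_real (δ : ℝ) (hδ : 0 < δ) (u : ℝ) :
    Kker δ (u : ℂ) =
      ((Real.sinh (2*δ) / (Real.pi * (Real.cosh (2*δ) - Real.cos (2*u))) : ℝ) : ℂ) := by
  have hden : 0 < Real.cosh (2*δ) - Real.cos (2*u) := by
    have h1 : Real.cos (2*u) ≤ 1 := Real.cos_le_one _
    have h2 : 1 < Real.cosh (2*δ) := by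
      rw [Real.one_lt_cosh]; positivity
    nlinarith
  set A : ℂ := (u : ℂ) - Complex.I * δ with hA
  set B : ℂ := (u : ℂ) + Complex.I * δ with hB
  have himA : A.im = -δ := by simp [hA]
  have himB : B.im = δ := by simp [hB]
  have hsA : Complex.sin A ≠ 0 := by
    intro h0
    obtain ⟨k, hk⟩ := Complex.sin_eq_zero_iff.mp h0
    have := congrArg Complex.im hk
    simp [himA] at this
    linarith
  have hsB : Complex.sin B ≠ 0 := by
    intro h0
    obtain ⟨k, hk⟩ := Complex.sin_eq_zero_iff.mp h0
    have := congrArg Complex.im hk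
    simp [himB] at this
    linarith
  have hBA : B - A = ((2*δ : ℝ) : ℂ) * Complex.I := by
    rw [hA, hB]; push_cast; ring
  have key1 : Complex.cos A * Complex.sin B - Complex.cos B * Complex.sin A
      = (Real.sinh (2*δ) : ℂ) * Complex.I := by
    have hs := Complex.sin_sub B A
    rw [hBA, Complex.sin_mul_I, ← Complex.ofReal_sinh] at hs
    linear_combination -hs
  have key2 : Complex.sin A * Complex.sin B
      = ((Real.cosh (2*δ) - Real.cos (2*u) : ℝ) : ℂ) / 2 := by
    have h := Complex.cos_sub_cos (A - B) (A + B)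
    have e1 : (A - B + (A + B)) / 2 = A := by ring
    have e2 : (A - B - (A + B)) / 2 = -B := by ring
    rw [e1, e2, Complex.sin_neg] at h
    have hAB : A - B = -(((2*δ : ℝ) : ℂ) * Complex.I) := by rw [hA, hB]; push_cast; ring
    have hABp : A + B = ((2*u : ℝ) : ℂ) := by rw [hA, hB]; push_cast; ring
    rw [hAB, hABp, Complex.cos_neg, Complex.cos_mul_I, ← Complex.ofReal_cosh,
      ← Complex.ofReal_cos] at h
    rw [Complex.ofReal_sub]
    linear_combination -h / 2
  have hπ : (Real.pi : ℂ) ≠ 0 := by exact_mod_cast Real.pi_ne_zero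
  have hdenC : ((Real.cosh (2*δ) - Real.cos (2*u) : ℝ) : ℂ) ≠ 0 := by
    exact_mod_cast hden.ne'
  have hcot : Complex.cot A - Complex.cot B
      = ((Real.sinh (2*δ) : ℂ) * Complex.I)
        / (((Real.cosh (2*δ) - Real.cos (2*u) : ℝ) : ℂ) / 2) := by
    rw [Complex.cot, Complex.cot, div_sub_div _ _ hsA hsB, key2]
    congr 1
    linear_combination key1
  have : Kker δ (u : ℂ) = (1 / (2 * (Real.pi : ℂ) * Complex.I)) *
      (Complex.cot A - Complex.cot B) := rfl
  rw [this, hcot]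
  have hI := Complex.I_ne_zero
  rw [Complex.ofReal_div, Complex.ofReal_mul, Complex.ofReal_sub]
  rw [div_div_eq_mul_div, div_mul_div_comm]
  have hdC : ((Real.cosh (2*δ) : ℝ) : ℂ) - ((Real.cos (2*u) : ℝ) : ℂ) ≠ 0 := by
    rw [← Complex.ofReal_sub]; exact hdenC
  rw [div_eq_div_iff (mul_ne_zero (mul_ne_zero (mul_ne_zero two_ne_zero hπ) hI) hdC)
    (mul_ne_zero hπ hdC)]
  ring

lemma poisson_denom_pos {r : ℝ} (hr0 : 0 < r) (hr1 : r < 1) (θ : ℝ) :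
    0 < 1 - 2*r*Real.cos θ + r^2 := by
  have h1 : Real.cos θ ≤ 1 := Real.cos_le_one θ
  nlinarith [sq_nonneg (1 - r)]

lemma poisson_hasSum {r : ℝ} (hr0 : 0 < r) (hr1 : r < 1) (θ : ℝ) :
    HasSum (fun n : ℤ => r ^ n.natAbs * Real.cos (n * θ))
      ((1 - r^2) / (1 - 2*r*Real.cos θ + r^2)) := by
  set f : ℤ → ℝ := fun n => r ^ n.natAbs * Real.cos (n * θ) with hf
  set z : ℂ := (r : ℂ) * Complex.exp ((θ : ℝ) * Complex.I) with hz
  have hznorm : ‖z‖ < 1 := by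
    rw [hz]
    rw [norm_mul, Complex.norm_exp_ofReal_mul_I]
    simpa [abs_of_pos hr0] using hr1
  have hgeo : HasSum (fun n : ℕ => z ^ n) (1 - z)⁻¹ :=
    hasSum_geometric_of_norm_lt_one hznorm
  have hre : HasSum (fun n : ℕ => (z ^ n).re) ((1 - z)⁻¹).re :=
    Complex.reCLM.hasSum hgeo
  have hzn : ∀ n : ℕ, (z ^ n).re = r ^ n * Real.cos (n * θ) := by
    intro n
    have : z ^ n = ((r ^ n : ℝ) : ℂ) * Complex.exp (((n * θ : ℝ)) * Complex.I) := by
      rw [hz, mul_pow, ← Complex.exp_nat_mul]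
      push_cast
      ring_nf
    rw [this, Complex.mul_re, Complex.ofReal_re, Complex.ofReal_im,
      Complex.exp_ofReal_mul_I_re]
    push_cast
    ring
  set D : ℝ := 1 - 2*r*Real.cos θ + r^2 with hD
  have hDpos : 0 < D := poisson_denom_pos hr0 hr1 θ
  have hreval : ((1 - z)⁻¹).re = (1 - r * Real.cos θ) / D := by
    rw [Complex.inv_re]
    have h1 : (1 - z).re = 1 - r * Real.cos θ := by
      simp [hz, Complex.exp_mul_I, Complex.sub_re, Complex.mul_re, Complex.add_re,
        Complex.cos_ofReal_re, Complex.sin_ofReal_im, Complex.cos_ofReal_im,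
        Complex.sin_ofReal_re]
    have h2 : Complex.normSq (1 - z) = D := by
      rw [Complex.normSq_apply, h1]
      have h3 : (1 - z).im = -(r * Real.sin θ) := by
        simp [hz, Complex.exp_mul_I, Complex.sub_im, Complex.mul_im, Complex.add_im,
          Complex.cos_ofReal_re, Complex.sin_ofReal_im, Complex.cos_ofReal_im,
          Complex.sin_ofReal_re]
      rw [h3, hD]
      nlinarith [Real.sin_sq_add_cos_sq θ]
    rw [h1, h2]
  have hnat : HasSum (fun n : ℕ => f n) ((1 - r * Real.cos θ) / D) := by
    rw [← hreval]
    convert hre using 2 with n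
    rw [hzn n, hf]
    simp
  have hneg : HasSum (fun n : ℕ => f (-n)) ((1 - r * Real.cos θ) / D) := by
    convert hnat using 2 with n
    rw [hf]
    simp only [Int.natAbs_neg, Int.natAbs_natCast, Int.cast_neg, Int.cast_natCast]
    rw [show (-(n:ℝ)) * θ = -((n:ℝ)*θ) by ring, Real.cos_neg]
  have htotal := hnat.of_nat_of_neg hneg
  have hf0 : f 0 = 1 := by simp [hf]
  rw [hf0] at htotal
  convert htotal using 1
  · rfl
  field_simp
  ring

lemma cosh_sub_cos_pos {α : ℝ} (hα : 0 < α) (θ : ℝ) :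
    0 < Real.cosh α - Real.cos θ := by
  have h1 : Real.cos θ ≤ 1 := Real.cos_le_one θ
  have h2 : 1 < Real.cosh α := by rw [Real.one_lt_cosh]; positivity
  linarith

lemma poisson_sinh {α : ℝ} (hα : 0 < α) (θ : ℝ) :
    HasSum (fun n : ℤ => Real.exp (-α) ^ n.natAbs * Real.cos (n * θ))
      (Real.sinh α / (Real.cosh α - Real.cos θ)) := by
  have hr0 : 0 < Real.exp (-α) := Real.exp_pos _
  have hr1 : Real.exp (-α) < 1 := Real.exp_lt_one_iff.2 (by linarith)
  have h := poisson_hasSum hr0 hr1 θ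
  convert h using 1
  have hd1 : 0 < Real.cosh α - Real.cos θ := cosh_sub_cos_pos hα θ
  have hd2 : 0 < 1 - 2*Real.exp (-α)*Real.cos θ + Real.exp (-α)^2 :=
    poisson_denom_pos hr0 hr1 θ
  rw [div_eq_div_iff hd1.ne' hd2.ne']
  have hprod : Real.exp (-α) * Real.exp α = 1 := by
    rw [← Real.exp_add]; simp
  rw [Real.sinh_eq, Real.cosh_eq]
  nlinarith [hprod]

lemma poisson_sinh' {α : ℝ} (hα : 0 < α) (c : ℝ) :
    HasSum (fun n : ℤ => Real.exp (-α) ^ n.natAbs * Real.cos (2*n*c))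
      (Real.sinh α / (Real.cosh α - Real.cos (2*c))) := by
  have h := poisson_sinh hα (2*c)
  simpa [show ∀ n : ℤ, (n:ℝ) * (2*c) = 2*(n:ℝ)*c from fun n => by ring] using h

lemma summable_pow_natAbs {r : ℝ} (h0 : 0 ≤ r) (h1 : r < 1) :
    Summable (fun n : ℤ => r ^ n.natAbs) := by
  apply Summable.of_nat_of_neg
  · simpa using summable_geometric_of_lt_one h0 h1
  · simpa using summable_geometric_of_lt_one h0 h1

lemma cosh_int_eq (γ : ℝ) (hγ : 0 < γ) (n : ℤ) :
    Real.cosh ((n:ℝ) * γ) = Real.cosh ((n.natAbs : ℝ) * γ) := by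
  have hcast : |(n:ℝ)| = (n.natAbs : ℝ) := by rw [Nat.cast_natAbs, Int.cast_abs]
  rw [← Real.cosh_abs ((n:ℝ) * γ), abs_mul, abs_of_pos hγ, hcast]

lemma inv_cosh_le {γ : ℝ} (hγ : 0 < γ) (n : ℤ) :
    1 / Real.cosh ((n:ℝ) * γ) ≤ 2 * Real.exp (-γ) ^ n.natAbs := by
  have hpos : 0 < Real.cosh ((n:ℝ) * γ) := Real.cosh_pos _
  rw [cosh_int_eq γ hγ n] at hpos ⊢
  have hexp : Real.exp (-γ) ^ n.natAbs = Real.exp (-((n.natAbs : ℝ) * γ)) := by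
    rw [← Real.exp_nat_mul]
    congr 1
    ring
  rw [hexp]
  rw [div_le_iff₀ hpos]
  rw [Real.cosh_eq]
  have h1 : 0 < Real.exp (-((n.natAbs:ℝ) * γ)) := Real.exp_pos _
  have h2 : Real.exp (-((n.natAbs:ℝ)*γ)) * Real.exp ((n.natAbs:ℝ)*γ) = 1 := by
    rw [← Real.exp_add]; simp
  nlinarith [Real.exp_pos ((n.natAbs:ℝ)*γ)]

lemma abs_cos_div_cosh_le {γ : ℝ} (hγ : 0 < γ) (t : ℝ) (n : ℤ) :
    |Real.cos t / Real.cosh ((n:ℝ) * γ)| ≤ 2 * Real.exp (-γ) ^ n.natAbs := by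
  have hpos : 0 < Real.cosh ((n:ℝ) * γ) := Real.cosh_pos _
  have h1 : |Real.cos t / Real.cosh ((n:ℝ)*γ)| ≤ 1 / Real.cosh ((n:ℝ)*γ) := by
    rw [abs_div, abs_of_pos hpos]
    gcongr
    exact Real.abs_cos_le_one t
  exact h1.trans (inv_cosh_le hγ n)

lemma summable_cos_div_cosh {γ : ℝ} (hγ : 0 < γ) (g : ℤ → ℝ) :
    Summable (fun n : ℤ => |Real.cos (g n) / Real.cosh ((n:ℝ) * γ)|) := by
  have hb1 : Real.exp (-γ) < 1 := Real.exp_lt_one_iff.2 (by linarith)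
  exact Summable.of_nonneg_of_le (fun n => abs_nonneg _)
    (fun n => abs_cos_div_cosh_le hγ (g n) n)
    ((summable_pow_natAbs (Real.exp_pos _).le hb1).mul_left 2)

lemma swap_tsum_integral {F : ℤ → ℝ → ℝ} {C : ℤ → ℝ} {a b : ℝ} (hab : a ≤ b)
    (hcont : ∀ n, Continuous (F n)) (hbound : ∀ n y, |F n y| ≤ C n) (hC : Summable C) :
    ∫ y in a..b, (∑' n, F n y) = ∑' n, ∫ y in a..b, F n y := by
  have hint : ∀ n : ℤ, Integrable (F n) (volume.restrict (Set.Ioc a b)) := fun n =>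
    ((hcont n).integrableOn_Ioc : IntegrableOn (F n) (Set.Ioc a b) volume)
  have hsum : Summable fun n : ℤ => ∫ y, ‖F n y‖ ∂(volume.restrict (Set.Ioc a b)) := by
    apply Summable.of_nonneg_of_le
      (fun n => integral_nonneg (fun y => norm_nonneg _))
      (fun n => ?_) (hC.mul_left (b - a))
    calc ∫ y, ‖F n y‖ ∂(volume.restrict (Set.Ioc a b))
        ≤ ∫ _ in Set.Ioc a b, C n := by
          apply setIntegral_mono_on (hint n).norm (integrableOn_const ?_)
            measurableSet_Ioc (fun y _ => hbound n y)
          rw [Real.volume_Ioc]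
          exact ENNReal.ofReal_ne_top
      _ = (b - a) * C n := by
          rw [setIntegral_const, Real.volume_real_Ioc_of_le hab, smul_eq_mul]
  rw [integral_of_le hab]
  rw [← MeasureTheory.integral_tsum_of_summable_integral_norm hint hsum]
  exact tsum_congr fun n => (integral_of_le hab).symm

lemma integral_cos_linear (c : ℝ) (k : ℤ) :
    ∫ y in (-(π/2))..(π/2), Real.cos (c + 2*k*y)
      = if k = 0 then π * Real.cos c else 0 := by
  rcases eq_or_ne k 0 with hk | hk
  · subst hk
    simp only [Int.cast_zero, mul_zero, zero_mul, add_zero, if_true]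
    rw [intervalIntegral.integral_const]
    simp
  · rw [if_neg hk]
    have hk' : (2*k : ℝ) ≠ 0 := by
      simp only [ne_eq, mul_eq_zero, OfNat.ofNat_ne_zero, Int.cast_eq_zero, false_or]
      exact_mod_cast hk
    have hderiv : ∀ y ∈ Set.uIcc (-(π/2)) (π/2),
        HasDerivAt (fun y => Real.sin (c + 2*k*y) / (2*k)) (Real.cos (c + 2*k*y)) y := by
      intro y _
      have h5 := ((((hasDerivAt_id y).const_mul (2*(k:ℝ))).const_add c).sin).div_const (2*(k:ℝ))
      convert h5 using 1
      · rfl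
      · rfl
      · rfl
      field_simp
      rfl
    rw [intervalIntegral.integral_eq_sub_of_hasDerivAt hderiv
      ((Real.continuous_cos.comp (by continuity)).intervalIntegrable _ _)]
    have e1 : c + 2*k*(π/2) = c + k*π := by ring
    have e2 : c + 2*k*(-(π/2)) = c + ((-k : ℤ):ℝ)*π := by push_cast; ring
    rw [e1, e2]
    rw [Real.sin_add_int_mul_pi, Real.sin_add_int_mul_pi]
    rw [zpow_neg]
    rcases Int.even_or_odd k with he | ho
    · rw [Even.neg_one_zpow he]
      simp
    · rw [Odd.neg_one_zpow ho]
      norm_num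

lemma integral_cos_mul_cos (x : ℝ) (m n : ℤ) :
    ∫ y in (-(π/2))..(π/2), Real.cos (2*m*(x - y)) * Real.cos (2*n*y)
      = (π/2) * Real.cos (2*m*x) *
          ((if m = -n then 1 else 0) + (if m = n then 1 else 0)) := by
  have hid : ∀ y : ℝ, Real.cos (2*m*(x-y)) * Real.cos (2*n*y)
      = (Real.cos ((2*m*x) + 2*((-(m+n) : ℤ):ℝ)*y) + Real.cos ((2*m*x) + 2*((n-m : ℤ):ℝ)*y)) / 2 := by
    intro y
    have hA := Real.cos_add (2*m*(x-y)) (2*n*y)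
    have hB := Real.cos_sub (2*m*(x-y)) (2*n*y)
    have e1 : 2*(m:ℝ)*(x-y) + 2*n*y = 2*m*x + 2*((n-m : ℤ):ℝ)*y := by push_cast; ring
    have e2 : 2*(m:ℝ)*(x-y) - 2*n*y = 2*m*x + 2*((-(m+n) : ℤ):ℝ)*y := by push_cast; ring
    rw [e1] at hA
    rw [e2] at hB
    linear_combination (-hA - hB) / 2
  simp_rw [hid]
  rw [intervalIntegral.integral_div, intervalIntegral.integral_add
    ((by continuity : Continuous fun y : ℝ => Real.cos (2*m*x + 2*((-(m+n) : ℤ):ℝ)*y)).intervalIntegrable _ _)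
    ((by continuity : Continuous fun y : ℝ => Real.cos (2*m*x + 2*((n-m : ℤ):ℝ)*y)).intervalIntegrable _ _)]
  rw [integral_cos_linear (2*m*x) (-(m+n)), integral_cos_linear (2*m*x) (n-m)]
  simp only [show (-(m+n) = 0) ↔ (m = -n) from by omega,
    show (n - m = 0) ↔ (m = n) from by omega]
  split_ifs <;> ring

lemma coeff_id {γ : ℝ} (hγ : 0 < γ) (n : ℤ) :
    2 * Real.exp (-γ) ^ n.natAbs
      - Real.exp (-(2*γ)) ^ n.natAbs / Real.cosh ((n:ℝ)*γ)
      = 1 / Real.cosh ((n:ℝ)*γ) := by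
  have hpos : 0 < Real.cosh ((n:ℝ)*γ) := Real.cosh_pos _
  rw [cosh_int_eq γ hγ n] at hpos ⊢
  set t : ℝ := (n.natAbs : ℝ) * γ with ht
  have e1 : Real.exp (-γ) ^ n.natAbs = Real.exp (-t) := by
    rw [← Real.exp_nat_mul]; congr 1; rw [ht]; ring
  have e2 : Real.exp (-(2*γ)) ^ n.natAbs = Real.exp (-t) * Real.exp (-t) := by
    rw [← Real.exp_nat_mul, ← Real.exp_add]; congr 1; rw [ht]; ring
  rw [e1, e2, Real.cosh_eq]
  have h2 : Real.exp (-t) * Real.exp t = 1 := by rw [← Real.exp_add]; simp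
  have h3 : 0 < Real.exp t + Real.exp (-t) := by positivity
  field_simp
  nlinarith [h2, Real.exp_pos t, Real.exp_pos (-t)]

end helpers

/-- The series defining `ε` converges absolutely and `ε` solves the dressed-energy linear
integral equation with bare energy `ε₀(x) = h − 4J·sinh²(γ)/(cosh(γ) − cos(2x))`. -/
theorem dressedEnergy_integral_equation (γ J h : ℝ) (hγ : 0 < γ) (hJ : 0 < J) (x : ℝ) :
    Summable (fun n : ℤ => |Real.cos (2 * n * x) / Real.cosh (n * γ)|) ∧
    (dressedEnergy γ J h x : ℂ) =
      ((h - 4 * J * Real.sinh γ ^ 2 / (Real.cosh γ - Real.cos (2 * x)) : ℝ) : ℂ) -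
        ∫ y in (-(Real.pi/2) : ℝ)..(Real.pi/2 : ℝ),
          Kker γ ((x : ℂ) - (y : ℂ)) * (dressedEnergy γ J h y : ℂ) := by
  have hb0 : (0:ℝ) < Real.exp (-γ) := Real.exp_pos _
  have hb1 : Real.exp (-γ) < 1 := Real.exp_lt_one_iff.2 (by linarith)
  have ha0 : (0:ℝ) < Real.exp (-(2*γ)) := Real.exp_pos _
  have ha1 : Real.exp (-(2*γ)) < 1 := Real.exp_lt_one_iff.2 (by linarith)
  have h2γ : (0:ℝ) < 2*γ := by linarith
  have hab : -(π/2) ≤ (π/2 : ℝ) := by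
    have := Real.pi_pos; linarith
  have hπ : (0:ℝ) < π := Real.pi_pos
  set a : ℝ := Real.exp (-(2*γ)) with ha_def
  set Kr : ℝ → ℝ := fun y =>
    Real.sinh (2*γ) / (π * (Real.cosh (2*γ) - Real.cos (2*(x - y)))) with hKr_def
  have hdenpos : ∀ u : ℝ, 0 < Real.cosh (2*γ) - Real.cos u := fun u =>
    cosh_sub_cos_pos h2γ u
  have hKrpos : ∀ y, 0 < Kr y := by
    intro y
    rw [hKr_def]
    have := hdenpos (2*(x-y))
    have hs : 0 < Real.sinh (2*γ) := by rw [Real.sinh_pos_iff]; linarith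
    positivity
  have hKr_cont : Continuous Kr := by
    rw [hKr_def]
    apply continuous_const.div (by continuity)
    intro y
    exact (mul_pos hπ (hdenpos _)).ne'
  -- kernel Poisson expansion
  have hKr_sum : ∀ y : ℝ, HasSum
      (fun m : ℤ => (1/π * a ^ m.natAbs) * Real.cos (2*m*(x - y))) (Kr y) := by
    intro y
    have h1 := (poisson_sinh' h2γ (x - y)).mul_left (1/π)
    rw [hKr_def]
    have : 1/π * (Real.sinh (2*γ) / (Real.cosh (2*γ) - Real.cos (2*(x-y))))
        = Real.sinh (2*γ) / (π * (Real.cosh (2*γ) - Real.cos (2*(x-y)))) := by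
      field_simp
    rw [this] at h1
    convert h1 using 2
    · rfl
    ring
  -- the key integrals I_n
  have hI : ∀ n : ℤ, (∫ y in (-(π/2))..(π/2), Kr y * Real.cos (2*n*y))
      = a ^ n.natAbs * Real.cos (2*n*x) := by
    intro n
    have hpt : ∀ y : ℝ, Kr y * Real.cos (2*n*y)
        = ∑' m : ℤ, ((1/π * a ^ m.natAbs) * Real.cos (2*m*(x - y))) * Real.cos (2*n*y) := by
      intro y
      rw [tsum_mul_right, (hKr_sum y).tsum_eq]
    have hswap : (∫ y in (-(π/2))..(π/2), Kr y * Real.cos (2*n*y))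
        = ∑' m : ℤ, ∫ y in (-(π/2))..(π/2),
            ((1/π * a ^ m.natAbs) * Real.cos (2*m*(x - y))) * Real.cos (2*n*y) := by
      rw [intervalIntegral.integral_congr (g := fun y =>
        ∑' m : ℤ, ((1/π * a ^ m.natAbs) * Real.cos (2*m*(x - y))) * Real.cos (2*n*y))
        (fun y _ => hpt y)]
      apply swap_tsum_integral (C := fun m : ℤ => 1/π * a ^ m.natAbs) hab
      · intro m
        exact (continuous_const.mul
          (by fun_prop : Continuous fun y : ℝ => Real.cos (2*(m:ℤ)*(x - y)))).mul
          (by fun_prop : Continuous fun y : ℝ => Real.cos (2*(n:ℤ)*y))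
      · intro m y
        have hc : (0:ℝ) < 1/π * a ^ m.natAbs := by positivity
        calc |((1/π * a ^ m.natAbs) * Real.cos (2*m*(x - y))) * Real.cos (2*n*y)|
            = (1/π * a ^ m.natAbs) * |Real.cos (2*m*(x-y)) * Real.cos (2*n*y)| := by
              rw [mul_assoc, abs_mul, abs_of_pos hc]
          _ ≤ (1/π * a ^ m.natAbs) * 1 := by
              apply mul_le_mul_of_nonneg_left _ hc.le
              rw [abs_mul]
              exact mul_le_one₀ (Real.abs_cos_le_one _) (abs_nonneg _) (Real.abs_cos_le_one _)
          _ = 1/π * a ^ m.natAbs := mul_one _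
      · exact (summable_pow_natAbs ha0.le ha1).mul_left (1/π)
    rw [hswap]
    have hval : ∀ m : ℤ, (∫ y in (-(π/2))..(π/2),
        ((1/π * a ^ m.natAbs) * Real.cos (2*m*(x - y))) * Real.cos (2*n*y))
        = (1/π * a ^ m.natAbs) * ((π/2) * Real.cos (2*m*x) *
            ((if m = -n then 1 else 0) + (if m = n then 1 else 0))) := by
      intro m
      rw [show (fun y => ((1/π * a ^ m.natAbs) * Real.cos (2*m*(x - y))) * Real.cos (2*n*y))
          = (fun y => (1/π * a ^ m.natAbs) * (Real.cos (2*m*(x - y)) * Real.cos (2*n*y)))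
          from funext fun y => by ring]
      rw [intervalIntegral.integral_const_mul, integral_cos_mul_cos x m n]
    rw [tsum_congr hval]
    have hsupp : ∀ m : ℤ, m ∉ ({n, -n} : Finset ℤ) →
        (1/π * a ^ m.natAbs) * ((π/2) * Real.cos (2*m*x) *
            ((if m = -n then 1 else 0) + (if m = n then 1 else 0))) = 0 := by
      intro m hm
      simp only [Finset.mem_insert, Finset.mem_singleton] at hm
      push_neg at hm
      rw [if_neg hm.2, if_neg hm.1]
      ring
    rw [tsum_eq_sum hsupp]
    rcases eq_or_ne n 0 with hn | hn
    · subst hn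
      simp only [neg_zero, Finset.insert_eq_self.2 (Finset.mem_singleton.2 rfl),
        Finset.sum_singleton]
      simp only [Int.natAbs_zero, pow_zero, Int.cast_zero, mul_zero, zero_mul, Real.cos_zero]
      norm_num
    · have hne : n ≠ -n := by omega
      rw [Finset.sum_pair hne]
      have g1 : (1/π * a ^ n.natAbs) * ((π/2) * Real.cos (2*n*x) *
          ((if n = -n then 1 else 0) + (if n = n then 1 else 0)))
          = (1/π * a ^ n.natAbs) * ((π/2) * Real.cos (2*n*x)) := by
        rw [if_neg hne, if_pos rfl]; ring
      have g2 : (1/π * a ^ (-n).natAbs) * ((π/2) * Real.cos (2*(-n : ℤ)*x) *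
          ((if (-n : ℤ) = -n then 1 else 0) + (if (-n : ℤ) = n then 1 else 0)))
          = (1/π * a ^ n.natAbs) * ((π/2) * Real.cos (2*n*x)) := by
        rw [if_pos rfl, if_neg (by omega : (-n : ℤ) ≠ n), Int.natAbs_neg]
        have : Real.cos (2*((-n : ℤ):ℝ)*x) = Real.cos (2*(n:ℝ)*x) := by
          rw [show (2*((-n : ℤ):ℝ)*x) = -(2*(n:ℝ)*x) by push_cast; ring, Real.cos_neg]
        rw [this]
        ring
      rw [g1, g2]
      field_simp
      ring
  -- summability of the defining series (part 1)
  have hsummable : Summable (fun n : ℤ => |Real.cos (2 * n * x) / Real.cosh (n * γ)|) :=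
    summable_cos_div_cosh hγ (fun n => 2*n*x)
  refine ⟨hsummable, ?_⟩
  -- continuity of S
  set S : ℝ → ℝ := fun y => ∑' n : ℤ, Real.cos (2*n*y) / Real.cosh ((n:ℝ)*γ) with hS_def
  have hS_cont : Continuous S := by
    rw [hS_def]
    apply continuous_tsum (f := fun (n : ℤ) (y : ℝ) => Real.cos (2*n*y) / Real.cosh ((n:ℝ)*γ))
      (u := fun n : ℤ => 2 * Real.exp (-γ) ^ n.natAbs)
    · intro n
      exact (by fun_prop : Continuous fun y : ℝ => Real.cos (2*(n:ℤ)*y)).div_const _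
    · exact (summable_pow_natAbs hb0.le hb1).mul_left 2
    · intro n y
      exact abs_cos_div_cosh_le hγ _ n
  have hε : ∀ y : ℝ, dressedEnergy γ J h y = h/2 - 2*J*Real.sinh γ * S y := fun y => rfl
  -- reduce complex integrand to real
  have hKker : ∀ y : ℝ, Kker γ ((x : ℂ) - (y : ℂ)) * (dressedEnergy γ J h y : ℂ)
      = ((Kr y * dressedEnergy γ J h y : ℝ) : ℂ) := by
    intro y
    have e1 : (x : ℂ) - (y : ℂ) = ((x - y : ℝ) : ℂ) := by push_cast; ring
    rw [e1, Kker_eq_real γ hγ (x - y), ← Complex.ofReal_mul]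
  have hIcplx : (∫ y in (-(π/2) : ℝ)..(π/2 : ℝ),
      Kker γ ((x : ℂ) - (y : ℂ)) * (dressedEnergy γ J h y : ℂ))
      = (((∫ y in (-(π/2) : ℝ)..(π/2 : ℝ), Kr y * dressedEnergy γ J h y) : ℝ) : ℂ) := by
    rw [intervalIntegral.integral_congr (fun y _ => hKker y)]
    exact intervalIntegral.integral_ofReal
  rw [hIcplx]
  rw [← Complex.ofReal_sub]
  norm_cast
  -- now a purely real identity
  -- compute the convolution integral
  have hsummableS : ∀ y : ℝ, Summable (fun n : ℤ => Real.cos (2*n*y) / Real.cosh ((n:ℝ)*γ)) :=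
    fun y => Summable.of_abs (summable_cos_div_cosh hγ (fun n => 2*n*y))
  have hKb : ∀ y, |Kr y| ≤ Real.sinh (2*γ) / (π * (Real.cosh (2*γ) - 1)) := by
    intro y
    rw [abs_of_pos (hKrpos y), hKr_def]
    have h1 : 1 < Real.cosh (2*γ) := by rw [Real.one_lt_cosh]; positivity
    have hs : 0 ≤ Real.sinh (2*γ) := by
      rw [← Real.sinh_zero]
      exact Real.sinh_le_sinh.2 (by linarith)
    rw [div_le_div_iff₀ (mul_pos hπ (hdenpos (2*(x-y)))) (mul_pos hπ (by linarith))]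
    have hc1 : Real.cos (2*(x-y)) ≤ 1 := Real.cos_le_one _
    have h4 : π * Real.cos (2*(x-y)) ≤ π * 1 := mul_le_mul_of_nonneg_left hc1 hπ.le
    exact mul_le_mul_of_nonneg_left (by linarith) hs
  have hconv : (∫ y in (-(π/2))..(π/2), Kr y * dressedEnergy γ J h y)
      = h/2 - 2*J*Real.sinh γ *
          ∑' n : ℤ, (1 / Real.cosh ((n:ℝ)*γ)) * (a ^ n.natAbs * Real.cos (2*n*x)) := by
    have hpt : ∀ y : ℝ, Kr y * dressedEnergy γ J h y
        = (h/2) * Kr y - (2*J*Real.sinh γ) * (Kr y * S y) := by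
      intro y; rw [hε y]; ring
    rw [intervalIntegral.integral_congr (fun y _ => hpt y)]
    have hint1 : IntervalIntegrable (fun y => (h/2) * Kr y) volume (-(π/2)) (π/2) :=
      (continuous_const.mul hKr_cont).intervalIntegrable _ _
    have hint2 : IntervalIntegrable (fun y => (2*J*Real.sinh γ) * (Kr y * S y))
        volume (-(π/2)) (π/2) :=
      (continuous_const.mul (hKr_cont.mul hS_cont)).intervalIntegrable _ _
    rw [intervalIntegral.integral_sub hint1 hint2,
      intervalIntegral.integral_const_mul, intervalIntegral.integral_const_mul]
    have hKr1 : (∫ y in (-(π/2))..(π/2), Kr y) = 1 := by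
      have h0 := hI 0
      simp only [Int.natAbs_zero, pow_zero, Int.cast_zero, mul_zero, zero_mul,
        Real.cos_zero, mul_one, one_mul] at h0
      exact h0
    have hKrS : (∫ y in (-(π/2))..(π/2), Kr y * S y)
        = ∑' n : ℤ, (1 / Real.cosh ((n:ℝ)*γ)) * (a ^ n.natAbs * Real.cos (2*n*x)) := by
      have hpt2 : ∀ y : ℝ, Kr y * S y
          = ∑' n : ℤ, (1 / Real.cosh ((n:ℝ)*γ)) * (Kr y * Real.cos (2*n*y)) := by
        intro y
        rw [hS_def]
        rw [← tsum_mul_left]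
        exact tsum_congr fun n => by ring
      rw [intervalIntegral.integral_congr (fun y _ => hpt2 y)]
      set Kb : ℝ := Real.sinh (2*γ) / (π * (Real.cosh (2*γ) - 1)) with hKb_def
      have hswap2 : (∫ y in (-(π/2))..(π/2),
          ∑' n : ℤ, (1 / Real.cosh ((n:ℝ)*γ)) * (Kr y * Real.cos (2*n*y)))
          = ∑' n : ℤ, ∫ y in (-(π/2))..(π/2),
              (1 / Real.cosh ((n:ℝ)*γ)) * (Kr y * Real.cos (2*n*y)) := by
        apply swap_tsum_integral (C := fun n => (2 * Real.exp (-γ) ^ n.natAbs) * Kb) hab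
        · intro n
          exact continuous_const.mul
            (hKr_cont.mul (by fun_prop : Continuous fun y : ℝ => Real.cos (2*(n:ℤ)*y)))
        · intro n y
          have hcoshpos : (0:ℝ) < Real.cosh ((n:ℝ)*γ) := Real.cosh_pos _
          have hKbpos : 0 ≤ Kb := le_trans (abs_nonneg _) (hKb y)
          calc |(1 / Real.cosh ((n:ℝ)*γ)) * (Kr y * Real.cos (2*n*y))|
              = (1 / Real.cosh ((n:ℝ)*γ)) * (|Kr y| * |Real.cos (2*n*y)|) := by
                rw [abs_mul, abs_mul, abs_of_pos (by positivity : (0:ℝ) < 1 / Real.cosh ((n:ℝ)*γ))]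
            _ ≤ (2 * Real.exp (-γ) ^ n.natAbs) * (Kb * 1) := by
                apply mul_le_mul (inv_cosh_le hγ n)
                · exact mul_le_mul (hKb y) (Real.abs_cos_le_one _) (abs_nonneg _) hKbpos
                · positivity
                · positivity
            _ = (2 * Real.exp (-γ) ^ n.natAbs) * Kb := by ring
        · exact ((summable_pow_natAbs hb0.le hb1).mul_left 2).mul_right Kb
      rw [hswap2]
      apply tsum_congr
      intro n
      rw [intervalIntegral.integral_const_mul, hI n]
    rw [hKr1, hKrS]
    ring
  rw [hconv]
  -- the bare-energy Poisson series
  have hb_sum : HasSum (fun n : ℤ => Real.exp (-γ) ^ n.natAbs * Real.cos (2*n*x))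
      (Real.sinh γ / (Real.cosh γ - Real.cos (2*x))) := poisson_sinh' hγ x
  -- final series identity
  have hT_sum : Summable (fun n : ℤ =>
      (1 / Real.cosh ((n:ℝ)*γ)) * (a ^ n.natAbs * Real.cos (2*n*x))) := by
    apply Summable.of_abs
    apply Summable.of_nonneg_of_le (fun n => abs_nonneg _)
      (fun n => ?_) ((summable_pow_natAbs ha0.le ha1))
    have hcoshpos : (0:ℝ) < Real.cosh ((n:ℝ)*γ) := Real.cosh_pos _
    have hcosh1 : (1:ℝ) ≤ Real.cosh ((n:ℝ)*γ) := Real.one_le_cosh _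
    calc |(1 / Real.cosh ((n:ℝ)*γ)) * (a ^ n.natAbs * Real.cos (2*n*x))|
        = (1 / Real.cosh ((n:ℝ)*γ)) * (a ^ n.natAbs * |Real.cos (2*n*x)|) := by
          rw [abs_mul, abs_mul, abs_of_pos (by positivity : (0:ℝ) < 1 / Real.cosh ((n:ℝ)*γ)),
            abs_of_pos (pow_pos ha0 _)]
      _ ≤ 1 * (a ^ n.natAbs * 1) := by
          apply mul_le_mul _ _ (by positivity) zero_le_one
          · rw [div_le_one hcoshpos]; exact hcosh1
          · exact mul_le_mul_of_nonneg_left (Real.abs_cos_le_one _) (pow_pos ha0 _).le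
      _ = a ^ n.natAbs := by ring
  have key : S x = 2 * (Real.sinh γ / (Real.cosh γ - Real.cos (2*x)))
      - ∑' n : ℤ, (1 / Real.cosh ((n:ℝ)*γ)) * (a ^ n.natAbs * Real.cos (2*n*x)) := by
    have h2b : HasSum (fun n : ℤ => 2 * (Real.exp (-γ) ^ n.natAbs * Real.cos (2*n*x)))
        (2 * (Real.sinh γ / (Real.cosh γ - Real.cos (2*x)))) := hb_sum.mul_left 2
    rw [eq_comm, ← h2b.tsum_eq, ← Summable.tsum_sub h2b.summable hT_sum]
    rw [hS_def]
    apply tsum_congr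
    intro n
    have hc := coeff_id hγ n
    have : 2 * (Real.exp (-γ) ^ n.natAbs * Real.cos (2*n*x))
        - (1 / Real.cosh ((n:ℝ)*γ)) * (a ^ n.natAbs * Real.cos (2*n*x))
        = (2 * Real.exp (-γ) ^ n.natAbs - a ^ n.natAbs / Real.cosh ((n:ℝ)*γ))
            * Real.cos (2*n*x) := by ring
    rw [this, ha_def, hc]
    ring
  rw [hε x, key]
  have hden : Real.cosh γ - Real.cos (2*x) ≠ 0 := (cosh_sub_cos_pos hγ (2*x)).ne'
  field_simp
  simp only [mul_comm γ]
  ring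
end
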